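/- Let T ⊂ ℝ^d and suppose the Bernstein inequality ‖∇P‖_{L^∞(T)} ≤ C₁ ‖P‖_{L^∞(T)} |T|^{-1/d} holds for polynomials P of degree ≤ m on T. Let a : T → ℝ satisfy 0 < a(x) ≤ M on T and let P be a polynomial of degree ≤ m with M₀ := ‖P‖_{L^∞(T)} attained at x₀ with P(x₀) = M₀ ≥ C·M for some C ≥ 4. Then, with T₀ := {x ∈ T : |x - x₀| ≤ |T|^{1/d}/(2C₁)}, one has |a(x) - P(x)| ≥ M₀/4 for all x ∈ T₀, and hence M₀ |T₀|^{1/q} ≤ 4 ‖a - P‖_{L^q(T)} for every 1 ≤ q < ∞. -/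

import Mathlib

open MeasureTheory
open scoped ENNReal

/-- Evaluation of a multivariate polynomial at a point of `ℝ^d`. -/
noncomputable def polyEval {d : ℕ} (P : MvPolynomial (Fin d) ℝ)
    (x : EuclideanSpace ℝ (Fin d)) : ℝ :=
  MvPolynomial.eval (fun i => x i) P

lemma polyEval_differentiable {d : ℕ} (P : MvPolynomial (Fin d) ℝ) :
    Differentiable ℝ (polyEval P) := by
  induction P using MvPolynomial.induction_on with
  | C a =>
      have : polyEval (MvPolynomial.C a : MvPolynomial (Fin d) ℝ) = fun _ => a := by
        funext x; simp [polyEval]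
      rw [this]; exact differentiable_const a
  | add p q hp hq =>
      have : polyEval (p + q) = fun x => polyEval p x + polyEval q x := by
        funext x; simp [polyEval]
      rw [this]; exact hp.add hq
  | mul_X p i hp =>
      have : polyEval (p * MvPolynomial.X i) = fun x => polyEval p x * x i := by
        funext x; simp [polyEval]
      rw [this]; exact hp.mul (EuclideanSpace.proj i : EuclideanSpace ℝ (Fin d) →L[ℝ] ℝ).differentiable

/-- **Key step of Proposition 3 (enforcing positive definiteness locally).**
Assume the Bernstein inequality `‖∇Q‖_{L^∞(T)} ≤ C₁ B |T|^{-1/d}` for all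
polynomials `Q` of degree `≤ m` on the convex cell `T` (with `B` any bound for
`‖Q‖_{L^∞(T)}`).  Let `0 < a ≤ M` on `T`, and let `P` be a polynomial of
degree `≤ m` with `M₀ = ‖P‖_{L^∞(T)}` attained at `x₀ ∈ T`, `P(x₀) = M₀ ≥ C·M`
for some `C ≥ 4`.  Then, with `T₀ = {x ∈ T | ‖x - x₀‖ ≤ |T|^{1/d}/(2C₁)}`,
`|a(x) - P(x)| ≥ M₀/4` on `T₀`, hence `M₀|T₀|^{1/q} ≤ 4‖a - P‖_{L^q(T)}` for
every `1 ≤ q < ∞`. -/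
theorem bernstein_lower_bound
    {d : ℕ} (hd : 0 < d) (T : Set (EuclideanSpace ℝ (Fin d)))
    (hTconv : Convex ℝ T) (hTvol : 0 < (volume T).toReal)
    (m : ℕ) (C₁ : ℝ) (hC₁ : 0 < C₁)
    (hBern : ∀ Q : MvPolynomial (Fin d) ℝ, Q.totalDegree ≤ m →
      ∀ B : ℝ, (∀ y ∈ T, |polyEval Q y| ≤ B) →
      ∀ x ∈ T, ‖fderiv ℝ (polyEval Q) x‖
        ≤ C₁ * B * (volume T).toReal ^ (-(1 / (d : ℝ))))
    (M : ℝ) (a : EuclideanSpace ℝ (Fin d) → ℝ)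
    (ha : ∀ x ∈ T, 0 < a x ∧ a x ≤ M)
    (P : MvPolynomial (Fin d) ℝ) (hP : P.totalDegree ≤ m)
    (M₀ : ℝ) (x₀ : EuclideanSpace ℝ (Fin d)) (hx₀ : x₀ ∈ T)
    (hM₀sup : ∀ x ∈ T, |polyEval P x| ≤ M₀) (hM₀att : polyEval P x₀ = M₀)
    (C : ℝ) (hC : 4 ≤ C) (hCM : C * M ≤ M₀) :
    (∀ x ∈ {x ∈ T | ‖x - x₀‖ ≤ (volume T).toReal ^ (1 / (d : ℝ)) / (2 * C₁)},
        M₀ / 4 ≤ |a x - polyEval P x|) ∧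
      ∀ q : ℝ, 1 ≤ q →
        ENNReal.ofReal M₀ *
            volume {x ∈ T | ‖x - x₀‖ ≤ (volume T).toReal ^ (1 / (d : ℝ)) / (2 * C₁)}
              ^ (1 / q)
          ≤ 4 * eLpNorm (fun x => a x - polyEval P x) (ENNReal.ofReal q)
              (volume.restrict T) := by
  set r : ℝ := (volume T).toReal ^ (1 / (d : ℝ)) / (2 * C₁) with hr
  set T₀ : Set (EuclideanSpace ℝ (Fin d)) := {x ∈ T | ‖x - x₀‖ ≤ r} with hT₀
  have hMpos : 0 < M := lt_of_lt_of_le (ha x₀ hx₀).1 (ha x₀ hx₀).2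
  have hM₀pos : 0 < M₀ := by nlinarith
  have hM4 : M ≤ M₀ / 4 := by nlinarith
  have hv : 0 < (volume T).toReal ^ (1 / (d : ℝ)) := Real.rpow_pos_of_pos hTvol _
  -- the pointwise lower bound
  have key : ∀ x ∈ T₀, M₀ / 4 ≤ |a x - polyEval P x| := by
    intro x hx
    obtain ⟨hxT, hxr⟩ := hx
    have hder : ∀ y ∈ T, DifferentiableAt ℝ (polyEval P) y :=
      fun y _ => (polyEval_differentiable P).differentiableAt
    have hK := hBern P hP M₀ hM₀sup
    have hmv :=
      hTconv.norm_image_sub_le_of_norm_fderiv_le hder hK hx₀ hxT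
    have hKnn : 0 ≤ C₁ * M₀ * (volume T).toReal ^ (-(1 / (d : ℝ))) := by
      positivity
    have h2 : C₁ * M₀ * (volume T).toReal ^ (-(1 / (d : ℝ))) * ‖x - x₀‖ ≤
        C₁ * M₀ * (volume T).toReal ^ (-(1 / (d : ℝ))) * r :=
      mul_le_mul_of_nonneg_left hxr hKnn
    have hneg : (volume T).toReal ^ (-(1 / (d : ℝ))) =
        ((volume T).toReal ^ (1 / (d : ℝ)))⁻¹ := Real.rpow_neg hTvol.le _
    have h3 : C₁ * M₀ * (volume T).toReal ^ (-(1 / (d : ℝ))) * r = M₀ / 2 := by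
      rw [hneg, hr]; field_simp
    have h4 : |polyEval P x - polyEval P x₀| ≤ M₀ / 2 := by
      calc |polyEval P x - polyEval P x₀| = ‖polyEval P x - polyEval P x₀‖ := rfl
        _ ≤ C₁ * M₀ * (volume T).toReal ^ (-(1 / (d : ℝ))) * ‖x - x₀‖ := hmv
        _ ≤ M₀ / 2 := by rw [← h3]; exact h2
    rw [hM₀att] at h4
    have hPx : M₀ / 2 ≤ polyEval P x := by
      have := abs_le.mp h4
      linarith [this.1]
    have haM : a x ≤ M₀ / 4 := le_trans (ha x hxT).2 hM4
    have : a x - polyEval P x ≤ -(M₀ / 4) := by linarith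
    calc M₀ / 4 ≤ -(a x - polyEval P x) := by linarith
      _ ≤ |a x - polyEval P x| := neg_le_abs _
  refine ⟨key, ?_⟩
  intro q hq
  set p : ℝ≥0∞ := ENNReal.ofReal q with hp
  have hp0 : p ≠ 0 := by
    simp [hp, ENNReal.ofReal_eq_zero]; linarith
  have hptop : p ≠ ∞ := ENNReal.ofReal_ne_top
  have hptr : p.toReal = q := ENNReal.toReal_ofReal (by linarith)
  -- null measurability of T₀ w.r.t. the restricted measure
  have hTnm : NullMeasurableSet T (volume.restrict T) := by
    have hTc : (volume.restrict T) Tᶜ = 0 := by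
      rw [Measure.restrict_apply₀' (hTconv.nullMeasurableSet (μ := volume))]; simp
    have := (NullMeasurableSet.of_null hTc).compl
    rwa [compl_compl] at this
  have hball : MeasurableSet {x : EuclideanSpace ℝ (Fin d) | ‖x - x₀‖ ≤ r} := by
    have : IsClosed {x : EuclideanSpace ℝ (Fin d) | ‖x - x₀‖ ≤ r} :=
      isClosed_le (by continuity) continuous_const
    exact this.measurableSet
  have hT₀eq : T₀ = T ∩ {x | ‖x - x₀‖ ≤ r} := by
    ext x; simp [hT₀, Set.mem_sep_iff, Set.mem_inter_iff]
  have hnm : NullMeasurableSet T₀ (volume.restrict T) := by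
    rw [hT₀eq]; exact hTnm.inter hball.nullMeasurableSet
  have hμT₀ : (volume.restrict T) T₀ = volume T₀ := by
    rw [Measure.restrict_apply₀' (hTconv.nullMeasurableSet (μ := volume))]
    congr 1
    exact Set.inter_eq_self_of_subset_left (fun x hx => hx.1)
  -- compare with the indicator
  have hmono : eLpNorm (T₀.indicator fun _ => M₀ / 4) p (volume.restrict T)
      ≤ eLpNorm (fun x => a x - polyEval P x) p (volume.restrict T) := by
    apply eLpNorm_mono
    intro x
    by_cases hx : x ∈ T₀
    · rw [Set.indicator_of_mem hx]
      have := key x hx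
      rw [Real.norm_eq_abs, Real.norm_eq_abs, abs_of_nonneg (by linarith : (0:ℝ) ≤ M₀/4)]
      exact this
    · rw [Set.indicator_of_notMem hx]
      simp [abs_nonneg]
  have hind : eLpNorm (T₀.indicator fun _ => M₀ / 4) p (volume.restrict T)
      = ENNReal.ofReal (M₀ / 4) * volume T₀ ^ (1 / q) := by
    rw [eLpNorm_indicator_const₀ hnm hp0 hptop, hμT₀, hptr]
    congr 1
    rw [← Real.enorm_eq_ofReal (by linarith : (0:ℝ) ≤ M₀/4)]
  have hfour : ENNReal.ofReal M₀ = 4 * ENNReal.ofReal (M₀ / 4) := by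
    rw [show (4:ℝ≥0∞) = ENNReal.ofReal (4:ℝ) by simp,
      ← ENNReal.ofReal_mul (by norm_num)]
    congr 1; ring
  calc ENNReal.ofReal M₀ * volume T₀ ^ (1 / q)
      = 4 * (ENNReal.ofReal (M₀ / 4) * volume T₀ ^ (1 / q)) := by
        rw [hfour, mul_assoc]
    _ = 4 * eLpNorm (T₀.indicator fun _ => M₀ / 4) p (volume.restrict T) := by
        rw [hind]
    _ ≤ 4 * eLpNorm (fun x => a x - polyEval P x) p (volume.restrict T) :=
        mul_le_mul_right hmono 4
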